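/- Let (X,d) be a finite metric space, z ∈ X, q ≥ 1, and r, R > 0 with β = r/R, R_0 = R/D_β, R_1 = R − R_0, r < R_0 and 3R_0 < R_1. Set γ = 25r/R_0². Then S_γ ⊆ S; that is, for every t ∈ (3R_0, R_1] such that Ball(z,t) has a γ-light shell of width r, the set P = Ball(z,t) satisfies, for every u ∈ X, Σ_{v ∈ Ball(u,r)} δ_P(u,v) ≤ 25·β·D_β²·Σ_{v ∈ Ball(u,2R)} (d(u,v)/R)·∨_P(u,v). -/

import Mathlib

open scoped Classical

/-- (`S_γ ⊆ S`.) With `β = r/R`, `D_β = 2(q+1)ln(1/β)`, `R₀ = R/D_β`,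
`R₁ = R - R₀`, `r < R₀ `, `3R₀ < R₁` and `γ = 25r/R₀²`: for every `t ∈ (3R₀,R₁]` such that
`Ball(z,t)` has a `γ`-light shell of width `r`, the cluster `P = Ball(z,t)` satisfies,
for every `u ∈ X`,
`Σ_{v ∈ Ball(u,r)} δ_P(u,v) ≤ 25 β D_β² Σ_{v ∈ Ball(u,2R)} (d(u,v)/R)·∨_P(u,v)`. -/
theorem stmt6 (X : Type) [MetricSpace X] [Fintype X] (z : X)
    (q r R β Dβ R0 R1 γ : ℝ) (hq : 1 ≤ q) (hr : 0 < r) (hR : 0 < R) (hrR : r < R)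
    (hβ : β = r / R) (hD : Dβ = 2 * (q + 1) * Real.log (1 / β))
    (hR0 : R0 = R / Dβ) (hR1 : R1 = R - R0) (hrR0 : r < R0) (h3 : 3 * R0 < R1)
    (hγ : γ = 25 * r / R0 ^ 2)
    (t : ℝ) (ht : t ∈ Set.Ioc (3 * R0) R1)
    (hlight : (Set.ncard {v : X | dist z v ≤ t + r} : ℝ)
        - (Set.ncard {v : X | dist z v ≤ t - r} : ℝ)
      ≤ γ * ∫ x in (0 : ℝ)..(t - r), (Set.ncard {v : X | dist z v ≤ x} : ℝ)) :
    ∀ u : X,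
      (∑ v : X, if dist u v ≤ r ∧ Xor' (dist z u ≤ t) (dist z v ≤ t) then (1 : ℝ) else 0)
      ≤ 25 * β * Dβ ^ 2 *
          ∑ v : X, (if dist u v ≤ 2 * R then
            (dist u v / R) * (if dist z u ≤ t ∨ dist z v ≤ t then 1 else 0) else 0) := by
  intro u
  obtain ⟨ht1, ht2⟩ := ht
  have hR0pos : 0 < R0 := hr.trans hrR0
  have hDpos : 0 < Dβ := by
    have hβ1 : β < 1 := by rw [hβ]; exact (div_lt_one hR).mpr hrR
    have hβ0 : 0 < β := by rw [hβ]; positivity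
    have : 0 < Real.log (1 / β) := Real.log_pos (by rw [lt_div_iff₀ hβ0]; linarith)
    nlinarith
  have hDeq : Dβ = R / R0 := by
    rw [hR0]; field_simp
  have hγpos : 0 < γ := by rw [hγ]; positivity
  have hconst : 25 * β * Dβ ^ 2 = γ * R := by
    rw [hγ, hβ, hDeq]; field_simp
  have htr : 3 * r < t := by linarith
  have hT0 : (0:ℝ) ≤ t - r := by linarith
  -- right-hand side sum terms are nonnegative
  have hterm_nonneg : ∀ v : X, (0:ℝ) ≤ (if dist u v ≤ 2 * R then
      (dist u v / R) * (if dist z u ≤ t ∨ dist z v ≤ t then 1 else 0) else 0) := by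
    intro v
    split_ifs <;> positivity
  by_cases hu : t - r < dist z u ∧ dist z u ≤ t + r
  · -- shell case
    obtain ⟨hu1, hu2⟩ := hu
    -- Step A : LHS ≤ shell count
    set A : Finset X := Finset.univ.filter
      (fun v => dist u v ≤ r ∧ Xor' (dist z u ≤ t) (dist z v ≤ t)) with hA
    set B : Finset X := Finset.univ.filter (fun v => dist z v ≤ t + r) with hB
    set C : Finset X := Finset.univ.filter (fun v => dist z v ≤ t - r) with hC
    have hshell : ∀ v ∈ A, t - r < dist z v ∧ dist z v ≤ t + r := by
      intro v hv
      simp only [hA, Finset.mem_filter, Finset.mem_univ, true_and] at hv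
      obtain ⟨hd, hx⟩ := hv
      rcases hx with ⟨h1, h2⟩ | ⟨h1, h2⟩
      · -- u in ball, v not
        push_neg at h2
        constructor
        · linarith
        · have := dist_triangle z u v
          have h' : dist u v = dist u v := rfl
          calc dist z v ≤ dist z u + dist u v := dist_triangle z u v
          _ ≤ t + r := by linarith
      · -- v in ball, u not
        push_neg at h2
        constructor
        · have : dist z u ≤ dist z v + dist v u := dist_triangle z v u
          rw [dist_comm v u] at this
          linarith
        · linarith
    have hAB : A ⊆ B \ C := by
      intro v hv
      obtain ⟨hv1, hv2⟩ := hshell v hv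
      simp only [hB, hC, Finset.mem_sdiff, Finset.mem_filter, Finset.mem_univ, true_and]
      exact ⟨hv2, by linarith⟩
    have hCB : C ⊆ B := by
      intro v hv
      simp only [hB, hC, Finset.mem_filter, Finset.mem_univ, true_and] at *
      linarith
    have hcardA : (∑ v : X, if dist u v ≤ r ∧ Xor' (dist z u ≤ t) (dist z v ≤ t)
        then (1:ℝ) else 0) = (A.card : ℝ) := by
      rw [hA]; rw [Finset.sum_boole]
    have hcard : (A.card : ℝ) ≤ (B.card : ℝ) - (C.card : ℝ) := by
      have h1 : A.card ≤ (B \ C).card := Finset.card_le_card hAB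
      have h2 : (B \ C).card = B.card - C.card := Finset.card_sdiff_of_subset hCB
      have h3 : C.card ≤ B.card := Finset.card_le_card hCB
      rw [h2] at h1
      have h4 : (A.card : ℝ) ≤ ((B.card - C.card : ℕ) : ℝ) := by exact_mod_cast h1
      rw [Nat.cast_sub h3] at h4
      exact h4
    have hncard : ∀ s : ℝ, (Set.ncard {v : X | dist z v ≤ s} : ℝ)
        = ((Finset.univ.filter (fun v : X => dist z v ≤ s)).card : ℝ) := by
      intro s
      rw [Set.ncard_eq_toFinset_card', Set.toFinset_setOf]
    -- Step B : integral bound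
    set T := t - r with hTdef
    have hintegrand : ∀ x : ℝ, (Set.ncard {v : X | dist z v ≤ x} : ℝ)
        = ∑ v : X, (Set.Ici (dist z v)).indicator (fun _ => (1:ℝ)) x := by
      intro x
      rw [hncard x, ← Finset.sum_boole]
      refine Finset.sum_congr rfl fun v _ => ?_
      simp [Set.indicator_apply, Set.mem_Ici]
    have hmono : ∀ v : X, Monotone ((Set.Ici (dist z v)).indicator (fun _ => (1:ℝ))) := by
      intro v x y hxy
      simp only [Set.indicator_apply, Set.mem_Ici]
      split_ifs with h1 h2
      · exact le_refl _
      · exact absurd (h1.trans hxy) h2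
      · exact zero_le_one
      · exact le_refl _
    have hint_eq : (∫ x in (0:ℝ)..T, (Set.ncard {v : X | dist z v ≤ x} : ℝ))
        = ∑ v : X, ∫ x in (0:ℝ)..T, (Set.Ici (dist z v)).indicator (fun _ => (1:ℝ)) x := by
      rw [intervalIntegral.integral_congr (g := fun x => ∑ v : X,
        (Set.Ici (dist z v)).indicator (fun _ => (1:ℝ)) x) (fun x _ => hintegrand x)]
      exact intervalIntegral.integral_finset_sum (fun v _ => (hmono v).intervalIntegrable)
    have hper : ∀ v : X, (∫ x in (0:ℝ)..T, (Set.Ici (dist z v)).indicator (fun _ => (1:ℝ)) x)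
        ≤ (if dist u v ≤ 2 * R then
            (dist u v) * (if dist z u ≤ t ∨ dist z v ≤ t then 1 else 0) else 0) := by
      intro v
      set c := dist z v with hc
      have hc0 : 0 ≤ c := dist_nonneg
      have heq : (∫ x in (0:ℝ)..T, (Set.Ici c).indicator (fun _ => (1:ℝ)) x)
          = (MeasureTheory.volume (Set.Ioc (0:ℝ) T ∩ Set.Ici c)).toReal := by
        rw [intervalIntegral.integral_of_le hT0,
          MeasureTheory.setIntegral_indicator measurableSet_Ici,
          MeasureTheory.setIntegral_const]
        simp [MeasureTheory.measureReal_def]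
      rw [heq]
      by_cases hcT : c ≤ T
      · -- v within radius T: bound by T - c ≤ dist u v
        have hsub : Set.Ioc (0:ℝ) T ∩ Set.Ici c ⊆ Set.Icc c T := by
          intro x hx
          exact ⟨hx.2, hx.1.2⟩
        have hvol : (MeasureTheory.volume (Set.Ioc (0:ℝ) T ∩ Set.Ici c)).toReal ≤ T - c := by
          have h1 := MeasureTheory.measure_mono (μ := MeasureTheory.volume) hsub
          rw [Real.volume_Icc] at h1
          have := ENNReal.toReal_mono (by simp) h1
          rwa [ENNReal.toReal_ofReal (by linarith)] at this
        have hduv : T - c < dist u v := by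
          have : dist z u ≤ dist z v + dist v u := dist_triangle z v u
          rw [dist_comm v u] at this
          linarith
        have hd2R : dist u v ≤ 2 * R := by
          have h1 : dist u v ≤ dist u z + dist z v := dist_triangle u z v
          rw [dist_comm u z] at h1
          have : t ≤ R - R0 := by linarith
          nlinarith
        have hor : dist z u ≤ t ∨ dist z v ≤ t := Or.inr (by rw [← hc]; linarith)
        rw [if_pos hd2R, if_pos hor]
        linarith
      · -- v outside radius T: integral is 0
        push_neg at hcT
        have hsub : Set.Ioc (0:ℝ) T ∩ Set.Ici c ⊆ (∅ : Set ℝ) := by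
          intro x hx
          exact absurd (hx.1.2) (by have := hx.2; simp only [Set.mem_Ici] at this; linarith)
        have hvol : MeasureTheory.volume (Set.Ioc (0:ℝ) T ∩ Set.Ici c) = 0 := by
          have := MeasureTheory.measure_mono (μ := MeasureTheory.volume) hsub
          simpa using this
        rw [hvol]
        simp only [ENNReal.toReal_zero]
        split_ifs <;> positivity
    -- combine
    have hchain1 : (∑ v : X, if dist u v ≤ r ∧ Xor' (dist z u ≤ t) (dist z v ≤ t)
        then (1:ℝ) else 0) ≤ γ * ∫ x in (0:ℝ)..T, (Set.ncard {v : X | dist z v ≤ x} : ℝ) := by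
      rw [hcardA]
      calc (A.card : ℝ) ≤ (B.card : ℝ) - (C.card : ℝ) := hcard
        _ = (Set.ncard {v : X | dist z v ≤ t + r} : ℝ)
            - (Set.ncard {v : X | dist z v ≤ t - r} : ℝ) := by rw [hncard, hncard]
        _ ≤ γ * ∫ x in (0:ℝ)..(t - r), (Set.ncard {v : X | dist z v ≤ x} : ℝ) := hlight
    have hchain2 : γ * (∫ x in (0:ℝ)..T, (Set.ncard {v : X | dist z v ≤ x} : ℝ))
        ≤ 25 * β * Dβ ^ 2 * ∑ v : X, (if dist u v ≤ 2 * R then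
            (dist u v / R) * (if dist z u ≤ t ∨ dist z v ≤ t then 1 else 0) else 0) := by
      rw [hint_eq, hconst]
      have h1 : (∑ v : X, ∫ x in (0:ℝ)..T, (Set.Ici (dist z v)).indicator (fun _ => (1:ℝ)) x)
          ≤ ∑ v : X, (if dist u v ≤ 2 * R then
            (dist u v) * (if dist z u ≤ t ∨ dist z v ≤ t then 1 else 0) else 0) :=
        Finset.sum_le_sum (fun v _ => hper v)
      have h2 : γ * R * ∑ v : X, (if dist u v ≤ 2 * R then
            (dist u v / R) * (if dist z u ≤ t ∨ dist z v ≤ t then 1 else 0) else 0)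
          = γ * ∑ v : X, (if dist u v ≤ 2 * R then
            (dist u v) * (if dist z u ≤ t ∨ dist z v ≤ t then 1 else 0) else 0) := by
        rw [Finset.mul_sum, Finset.mul_sum]
        congr 1
        ext v
        split_ifs <;> field_simp <;> ring
      rw [h2]
      exact mul_le_mul_of_nonneg_left h1 hγpos.le
    exact hchain1.trans hchain2
  · -- u not in shell: LHS = 0
    have hzero : (∑ v : X, if dist u v ≤ r ∧ Xor' (dist z u ≤ t) (dist z v ≤ t)
        then (1:ℝ) else 0) = 0 := by
      apply Finset.sum_eq_zero
      intro v _
      rw [if_neg]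
      rintro ⟨hd, hx⟩
      apply hu
      rcases hx with ⟨h1, h2⟩ | ⟨h1, h2⟩
      · push_neg at h2
        have h3 : dist z v ≤ dist z u + dist u v := dist_triangle z u v
        constructor
        · linarith
        · linarith
      · push_neg at h2
        have h3 : dist z u ≤ dist z v + dist v u := dist_triangle z v u
        rw [dist_comm v u] at h3
        constructor
        · linarith
        · linarith
    rw [hzero]
    have : (0:ℝ) ≤ ∑ v : X, (if dist u v ≤ 2 * R then
        (dist u v / R) * (if dist z u ≤ t ∨ dist z v ≤ t then 1 else 0) else 0) :=
      Finset.sum_nonneg (fun v _ => hterm_nonneg v)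
    have hc : (0:ℝ) ≤ 25 * β * Dβ ^ 2 := by rw [hconst]; positivity
    exact mul_nonneg hc this
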